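/- Let f be a fixed continuously differentiable function on [0,T] × [x_L, x_R] × [-1,1] with bounded first partial derivatives, let σ, α, G be continuous on [x_L, x_R], and let ρ = ⟨f⟩. Then the PINN governing residual loss L^ε := ∫_0^T ∫_{x_L}^{x_R} ∫_{-1}^{1} | ε² ∂_t f + ε μ ∂_x f − σ(x)(ρ − f) + ε² α(x) f − ε² G(x) |² dμ dx dt converges, as ε → 0⁺, to ∫_0^T ∫_{x_L}^{x_R} ∫_{-1}^{1} σ(x)² | ρ − f |² dμ dx dt, i.e. to the residual of the equation σ(ρ − f) = 0 rather than of the diffusion limit equation. -/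

import Mathlib

open MeasureTheory Real intervalIntegral

/-- The partial derivative `∂_t f` of `f = f(t,x,μ)` in the time variable. -/
noncomputable def pt (f : ℝ → ℝ → ℝ → ℝ) (t x μ : ℝ) : ℝ := deriv (fun s => f s x μ) t

/-- The partial derivative `∂_x f` of `f = f(t,x,μ)` in the space variable. -/
noncomputable def px (f : ℝ → ℝ → ℝ → ℝ) (t x μ : ℝ) : ℝ := deriv (fun y => f t y μ) x

/-- The angular average `⟨f⟩(t,x) = (1/2) ∫_{-1}^{1} f(t,x,μ) dμ`. -/
noncomputable def avg (f : ℝ → ℝ → ℝ → ℝ) (t x : ℝ) : ℝ :=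
  (1 / 2) * ∫ μ in (-1 : ℝ)..1, f t x μ

/-- `f` satisfies the scaled 1D linear radiative transfer equation
`ε² ∂_t f + ε μ ∂_x f = σ(x)(⟨f⟩ − f) − ε² α(x) f + ε² G(x)`
on `(0,T) × (x_L,x_R) × [-1,1]`. -/
def SolvesLRTE (ε T xL xR : ℝ) (σ α G : ℝ → ℝ) (f : ℝ → ℝ → ℝ → ℝ) : Prop :=
  ∀ t ∈ Set.Ioo (0 : ℝ) T, ∀ x ∈ Set.Ioo xL xR, ∀ μ ∈ Set.Icc (-1 : ℝ) 1,
    ε ^ 2 * pt f t x μ + ε * μ * px f t x μ =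
      σ x * (avg f t x - f t x μ) - ε ^ 2 * α x * f t x μ + ε ^ 2 * G x

open Filter

lemma continuous_pt (f : ℝ → ℝ → ℝ → ℝ)
    (hf : ContDiff ℝ 1 (fun p : ℝ × ℝ × ℝ => f p.1 p.2.1 p.2.2)) :
    Continuous (fun p : ℝ × ℝ × ℝ => pt f p.1 p.2.1 p.2.2) := by
  have hfd : ∀ p : ℝ × ℝ × ℝ, HasFDerivAt (fun q : ℝ × ℝ × ℝ => f q.1 q.2.1 q.2.2)
      (fderiv ℝ (fun q : ℝ × ℝ × ℝ => f q.1 q.2.1 q.2.2) p) p :=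
    fun p => (hf.differentiable one_ne_zero p).hasFDerivAt
  have heq : ∀ t x μ : ℝ, pt f t x μ =
      fderiv ℝ (fun q : ℝ × ℝ × ℝ => f q.1 q.2.1 q.2.2) (t, x, μ) (1, 0, 0) := by
    intro t x μ
    have hline : HasDerivAt (fun s : ℝ => ((s, x, μ) : ℝ × ℝ × ℝ)) ((1 : ℝ), (0 : ℝ), (0 : ℝ)) t :=
      (hasDerivAt_id t).prodMk ((hasDerivAt_const t x).prodMk (hasDerivAt_const t μ))
    exact ((hfd (t, x, μ)).comp_hasDerivAt t hline).deriv
  have : Continuous fun p : ℝ × ℝ × ℝ =>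
      fderiv ℝ (fun q : ℝ × ℝ × ℝ => f q.1 q.2.1 q.2.2) p ((1 : ℝ), (0 : ℝ), (0 : ℝ)) :=
    (hf.continuous_fderiv one_ne_zero).clm_apply continuous_const
  simpa only [heq] using this

lemma continuous_px (f : ℝ → ℝ → ℝ → ℝ)
    (hf : ContDiff ℝ 1 (fun p : ℝ × ℝ × ℝ => f p.1 p.2.1 p.2.2)) :
    Continuous (fun p : ℝ × ℝ × ℝ => px f p.1 p.2.1 p.2.2) := by
  have hfd : ∀ p : ℝ × ℝ × ℝ, HasFDerivAt (fun q : ℝ × ℝ × ℝ => f q.1 q.2.1 q.2.2)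
      (fderiv ℝ (fun q : ℝ × ℝ × ℝ => f q.1 q.2.1 q.2.2) p) p :=
    fun p => (hf.differentiable one_ne_zero p).hasFDerivAt
  have heq : ∀ t x μ : ℝ, px f t x μ =
      fderiv ℝ (fun q : ℝ × ℝ × ℝ => f q.1 q.2.1 q.2.2) (t, x, μ) (0, 1, 0) := by
    intro t x μ
    have hline : HasDerivAt (fun y : ℝ => ((t, y, μ) : ℝ × ℝ × ℝ)) ((0 : ℝ), (1 : ℝ), (0 : ℝ)) x :=
      (hasDerivAt_const x t).prodMk ((hasDerivAt_id x).prodMk (hasDerivAt_const x μ))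
    exact ((hfd (t, x, μ)).comp_hasDerivAt x hline).deriv
  have : Continuous fun p : ℝ × ℝ × ℝ =>
      fderiv ℝ (fun q : ℝ × ℝ × ℝ => f q.1 q.2.1 q.2.2) p ((0 : ℝ), (1 : ℝ), (0 : ℝ)) :=
    (hf.continuous_fderiv one_ne_zero).clm_apply continuous_const
  simpa only [heq] using this

lemma continuous_avg (f : ℝ → ℝ → ℝ → ℝ)
    (hf : ContDiff ℝ 1 (fun p : ℝ × ℝ × ℝ => f p.1 p.2.1 p.2.2)) :
    Continuous (fun p : ℝ × ℝ => avg f p.1 p.2) := by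
  have h : Continuous (Function.uncurry fun (p : ℝ × ℝ) (μ : ℝ) => f p.1 p.2 μ) := by
    have : Continuous fun q : (ℝ × ℝ) × ℝ => ((q.1.1, q.1.2, q.2) : ℝ × ℝ × ℝ) := by fun_prop
    exact hf.continuous.comp this
  have := intervalIntegral.continuous_parametric_intervalIntegral_of_continuous'
    (μ := volume) h (-1 : ℝ) 1
  exact continuous_const.mul this

set_option maxHeartbeats 1000000 in
/-- The vanilla PINN governing residual loss for the scaled 1D LRTE, for a fixed
continuously differentiable `f` with bounded first partial derivatives and `σ, α, G`
continuous on `[x_L,x_R]`, converges as `ε → 0⁺` to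
`∫∫∫ σ² |ρ − f|²`, the residual of the equation `σ(ρ − f) = 0` (and not of the
diffusion limit equation). -/
theorem PINN_loss_tendsto_wrong_limit
    (T xL xR : ℝ) (σ α G : ℝ → ℝ) (f : ℝ → ℝ → ℝ → ℝ)
    (hT : 0 < T) (hD : xL < xR)
    (hf : ContDiff ℝ 1 (fun p : ℝ × ℝ × ℝ => f p.1 p.2.1 p.2.2))
    (hbd : ∃ C : ℝ, ∀ p : ℝ × ℝ × ℝ,
      ‖fderiv ℝ (fun q : ℝ × ℝ × ℝ => f q.1 q.2.1 q.2.2) p‖ ≤ C)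
    (hσ : ContinuousOn σ (Set.Icc xL xR)) (hα : ContinuousOn α (Set.Icc xL xR))
    (hG : ContinuousOn G (Set.Icc xL xR)) :
    Tendsto
      (fun ε : ℝ =>
        ∫ t in (0 : ℝ)..T, ∫ x in xL..xR, ∫ μ in (-1 : ℝ)..1,
          |ε ^ 2 * pt f t x μ + ε * μ * px f t x μ - σ x * (avg f t x - f t x μ)
            + ε ^ 2 * α x * f t x μ - ε ^ 2 * G x| ^ 2)
      (nhdsWithin 0 (Set.Ioi 0))
      (nhds (∫ t in (0 : ℝ)..T, ∫ x in xL..xR, ∫ μ in (-1 : ℝ)..1,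
          (σ x) ^ 2 * |avg f t x - f t x μ| ^ 2)) := by
  -- continuous global extensions of σ, α, G
  set σ' : ℝ → ℝ := fun x => σ (Set.projIcc xL xR hD.le x) with hσ'def
  set α' : ℝ → ℝ := fun x => α (Set.projIcc xL xR hD.le x) with hα'def
  set G' : ℝ → ℝ := fun x => G (Set.projIcc xL xR hD.le x) with hG'def
  have hmem : ∀ x : ℝ, ((Set.projIcc xL xR hD.le x : Set.Icc xL xR) : ℝ) ∈ Set.Icc xL xR :=
    fun x => (Set.projIcc xL xR hD.le x).2
  have hproj : Continuous fun x : ℝ => ((Set.projIcc xL xR hD.le x : Set.Icc xL xR) : ℝ) :=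
    continuous_subtype_val.comp continuous_projIcc
  have hσc : Continuous σ' := hσ.comp_continuous hproj hmem
  have hαc : Continuous α' := hα.comp_continuous hproj hmem
  have hGc : Continuous G' := hG.comp_continuous hproj hmem
  have hσeq : ∀ x ∈ Set.Icc xL xR, σ' x = σ x := fun x hx => by
    simp [hσ'def, Set.projIcc_of_mem hD.le hx]
  have hαeq : ∀ x ∈ Set.Icc xL xR, α' x = α x := fun x hx => by
    simp [hα'def, Set.projIcc_of_mem hD.le hx]
  have hGeq : ∀ x ∈ Set.Icc xL xR, G' x = G x := fun x hx => by
    simp [hG'def, Set.projIcc_of_mem hD.le hx]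
  -- the residual with the extended coefficients
  set R : ℝ → ℝ → ℝ → ℝ → ℝ := fun ε t x μ =>
    |ε ^ 2 * pt f t x μ + ε * μ * px f t x μ - σ' x * (avg f t x - f t x μ)
      + ε ^ 2 * α' x * f t x μ - ε ^ 2 * G' x| ^ 2 with hRdef
  -- the loss equals F
  have hFeq : (fun ε : ℝ =>
        ∫ t in (0 : ℝ)..T, ∫ x in xL..xR, ∫ μ in (-1 : ℝ)..1,
          |ε ^ 2 * pt f t x μ + ε * μ * px f t x μ - σ x * (avg f t x - f t x μ)
            + ε ^ 2 * α x * f t x μ - ε ^ 2 * G x| ^ 2) =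
      fun ε => ∫ t in (0 : ℝ)..T, ∫ x in xL..xR, ∫ μ in (-1 : ℝ)..1, R ε t x μ := by
    funext ε
    refine intervalIntegral.integral_congr fun t _ => ?_
    refine intervalIntegral.integral_congr fun x hx => ?_
    rw [Set.uIcc_of_le hD.le] at hx
    refine intervalIntegral.integral_congr fun μ _ => ?_
    simp only [hRdef]
    rw [hσeq x hx, hαeq x hx, hGeq x hx]
  -- the limit equals F 0
  have hLeq : (∫ t in (0 : ℝ)..T, ∫ x in xL..xR, ∫ μ in (-1 : ℝ)..1,
      (σ x) ^ 2 * |avg f t x - f t x μ| ^ 2) =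
      ∫ t in (0 : ℝ)..T, ∫ x in xL..xR, ∫ μ in (-1 : ℝ)..1, R 0 t x μ := by
    refine intervalIntegral.integral_congr fun t _ => ?_
    refine intervalIntegral.integral_congr fun x hx => ?_
    rw [Set.uIcc_of_le hD.le] at hx
    refine intervalIntegral.integral_congr fun μ _ => ?_
    simp only [hRdef]
    rw [← hσeq x hx]
    rw [show (0 : ℝ) ^ 2 * pt f t x μ + 0 * μ * px f t x μ - σ' x * (avg f t x - f t x μ)
        + 0 ^ 2 * α' x * f t x μ - 0 ^ 2 * G' x = -(σ' x * (avg f t x - f t x μ)) by ring]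
    rw [abs_neg, abs_mul, mul_pow, sq_abs (σ' x)]
  -- continuity of F
  have hpt := continuous_pt f hf
  have hpx := continuous_px f hf
  have havg := continuous_avg f hf
  have hRc : Continuous fun q : (ℝ × ℝ × ℝ) × ℝ => R q.1.1 q.1.2.1 q.1.2.2 q.2 := by
    have cε : Continuous fun q : (ℝ × ℝ × ℝ) × ℝ => q.1.1 := by fun_prop
    have cμ : Continuous fun q : (ℝ × ℝ × ℝ) × ℝ => q.2 := by fun_prop
    have c1 : Continuous fun q : (ℝ × ℝ × ℝ) × ℝ => pt f q.1.2.1 q.1.2.2 q.2 :=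
      hpt.comp (by fun_prop : Continuous fun q : (ℝ × ℝ × ℝ) × ℝ =>
        ((q.1.2.1, q.1.2.2, q.2) : ℝ × ℝ × ℝ))
    have c2 : Continuous fun q : (ℝ × ℝ × ℝ) × ℝ => px f q.1.2.1 q.1.2.2 q.2 :=
      hpx.comp (by fun_prop : Continuous fun q : (ℝ × ℝ × ℝ) × ℝ =>
        ((q.1.2.1, q.1.2.2, q.2) : ℝ × ℝ × ℝ))
    have c3 : Continuous fun q : (ℝ × ℝ × ℝ) × ℝ => avg f q.1.2.1 q.1.2.2 :=
      havg.comp (by fun_prop : Continuous fun q : (ℝ × ℝ × ℝ) × ℝ =>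
        ((q.1.2.1, q.1.2.2) : ℝ × ℝ))
    have c4 : Continuous fun q : (ℝ × ℝ × ℝ) × ℝ => f q.1.2.1 q.1.2.2 q.2 :=
      hf.continuous.comp (by fun_prop : Continuous fun q : (ℝ × ℝ × ℝ) × ℝ =>
        ((q.1.2.1, q.1.2.2, q.2) : ℝ × ℝ × ℝ))
    have c5 : Continuous fun q : (ℝ × ℝ × ℝ) × ℝ => σ' q.1.2.2 :=
      hσc.comp (by fun_prop)
    have c6 : Continuous fun q : (ℝ × ℝ × ℝ) × ℝ => α' q.1.2.2 :=
      hαc.comp (by fun_prop)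
    have c7 : Continuous fun q : (ℝ × ℝ × ℝ) × ℝ => G' q.1.2.2 :=
      hGc.comp (by fun_prop)
    exact (((((((cε.pow 2).mul c1).add ((cε.mul cμ).mul c2)).sub
      (c5.mul (c3.sub c4))).add (((cε.pow 2).mul c6).mul c4)).sub
      ((cε.pow 2).mul c7)).abs).pow 2
  clear_value σ' α' G' R
  have hinner : Continuous fun p : ℝ × ℝ × ℝ => ∫ μ in (-1 : ℝ)..1, R p.1 p.2.1 p.2.2 μ :=
    intervalIntegral.continuous_parametric_intervalIntegral_of_continuous'
      (μ := volume) (f := fun (p : ℝ × ℝ × ℝ) (μ : ℝ) => R p.1 p.2.1 p.2.2 μ)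
      hRc (-1 : ℝ) 1
  have hmid : Continuous fun p : ℝ × ℝ =>
      ∫ x in xL..xR, ∫ μ in (-1 : ℝ)..1, R p.1 p.2 x μ :=
    intervalIntegral.continuous_parametric_intervalIntegral_of_continuous'
      (μ := volume)
      (f := fun (p : ℝ × ℝ) (x : ℝ) => ∫ μ in (-1 : ℝ)..1, R p.1 p.2 x μ)
      (hinner.comp (by fun_prop : Continuous fun q : (ℝ × ℝ) × ℝ =>
        ((q.1.1, q.1.2, q.2) : ℝ × ℝ × ℝ))) xL xR
  have hFc : Continuous fun ε : ℝ =>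
      ∫ t in (0 : ℝ)..T, ∫ x in xL..xR, ∫ μ in (-1 : ℝ)..1, R ε t x μ :=
    intervalIntegral.continuous_parametric_intervalIntegral_of_continuous'
      (μ := volume)
      (f := fun (ε : ℝ) (t : ℝ) => ∫ x in xL..xR, ∫ μ in (-1 : ℝ)..1, R ε t x μ)
      hmid 0 T
  rw [hFeq, hLeq]
  exact (hFc.tendsto 0).mono_left nhdsWithin_le_nhds
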